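/- A nonincreasing sequence of nonnegative integers z_1 ≥ ... ≥ z_n with even sum is the degree sequence of a simple graph (no parallel edges or self-loops) if and only if Σ_{i=1}^k z_i ≤ k(k−1) + Σ_{i=k+1}^n min(z_i, k) for all 1 ≤ k ≤ n. -/

import Mathlib

open Finset SimpleGraph

variable {n : ℕ}

open Finset SimpleGraph

variable {n : ℕ}

/-- degree as a filter card -/
def D (G : SimpleGraph (Fin n)) [DecidableRel G.Adj] (v : Fin n) : ℕ :=
  (univ.filter (G.Adj v)).card

lemma degree_eq_D (G : SimpleGraph (Fin n)) [DecidableRel G.Adj] (v : Fin n) :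
    G.degree v = D G v := by
  rw [D, ← neighborFinset_eq_filter]; rfl

def addE (G : SimpleGraph (Fin n)) (u v : Fin n) : SimpleGraph (Fin n) where
  Adj a b := (G.Adj a b ∨ (a = u ∧ b = v) ∨ (a = v ∧ b = u)) ∧ a ≠ b
  symm := by
    constructor
    rintro a b ⟨h, hne⟩
    refine ⟨?_, hne.symm⟩
    rcases h with h|h|h
    · exact Or.inl h.symm
    · exact Or.inr (Or.inr ⟨h.2, h.1⟩)
    · exact Or.inr (Or.inl ⟨h.2, h.1⟩)
  loopless := ⟨fun a h => h.2 rfl⟩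

def delE (G : SimpleGraph (Fin n)) (u v : Fin n) : SimpleGraph (Fin n) where
  Adj a b := G.Adj a b ∧ ¬((a = u ∧ b = v) ∨ (a = v ∧ b = u))
  symm := by
    constructor
    rintro a b ⟨h, hne⟩
    exact ⟨h.symm, by tauto⟩
  loopless := ⟨fun a h => G.loopless.irrefl a h.1⟩

instance (G : SimpleGraph (Fin n)) [DecidableRel G.Adj] (u v : Fin n) :
    DecidableRel (addE G u v).Adj := fun a b =>
  inferInstanceAs (Decidable ((G.Adj a b ∨ (a = u ∧ b = v) ∨ (a = v ∧ b = u)) ∧ a ≠ b))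

instance (G : SimpleGraph (Fin n)) [DecidableRel G.Adj] (u v : Fin n) :
    DecidableRel (delE G u v).Adj := fun a b =>
  inferInstanceAs (Decidable (G.Adj a b ∧ ¬((a = u ∧ b = v) ∨ (a = v ∧ b = u))))

lemma addE_adj {G : SimpleGraph (Fin n)} {u v a b : Fin n} :
    (addE G u v).Adj a b ↔ (G.Adj a b ∨ (a = u ∧ b = v) ∨ (a = v ∧ b = u)) ∧ a ≠ b := Iff.rfl

lemma delE_adj {G : SimpleGraph (Fin n)} {u v a b : Fin n} :
    (delE G u v).Adj a b ↔ G.Adj a b ∧ ¬((a = u ∧ b = v) ∨ (a = v ∧ b = u)) := Iff.rfl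

lemma addE_comm {G : SimpleGraph (Fin n)} {u v : Fin n} : addE G u v = addE G v u := by
  ext a b; rw [addE_adj, addE_adj]; tauto

lemma D_addE_fst {G : SimpleGraph (Fin n)} [DecidableRel G.Adj] {u v : Fin n}
    (hne : u ≠ v) (h : ¬G.Adj u v) : D (addE G u v) u = D G u + 1 := by
  unfold D
  have : univ.filter ((addE G u v).Adj u) = insert v (univ.filter (G.Adj u)) := by
    ext b
    simp only [mem_filter, mem_univ, true_and, mem_insert, addE_adj]
    constructor
    · rintro ⟨h1 | h1 | h1, hne2⟩
      · exact Or.inr h1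
      · first | exact Or.inl h1.2 | exact Or.inl h1
      · first | exact absurd h1.1 hne | exact absurd h1 hne
    · rintro (rfl | h1)
      · exact ⟨Or.inr (Or.inl (by simp)), hne⟩
      · exact ⟨Or.inl h1, G.ne_of_adj h1⟩
  rw [this, card_insert_of_notMem (by simp [h])]

lemma D_addE_snd {G : SimpleGraph (Fin n)} [DecidableRel G.Adj] {u v : Fin n}
    (hne : u ≠ v) (h : ¬G.Adj u v) : D (addE G u v) v = D G v + 1 := by
  have e : univ.filter ((addE G u v).Adj v) = univ.filter ((addE G v u).Adj v) := by
    ext b; rw [mem_filter, mem_filter, addE_adj, addE_adj]; tauto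
  unfold D
  rw [e]
  exact D_addE_fst hne.symm (fun hh => h hh.symm)

lemma D_addE_other {G : SimpleGraph (Fin n)} [DecidableRel G.Adj] {u v w : Fin n}
    (h1 : w ≠ u) (h2 : w ≠ v) : D (addE G u v) w = D G w := by
  unfold D
  congr 1
  ext b
  simp only [mem_filter, mem_univ, true_and, addE_adj]
  constructor
  · rintro ⟨hh | hh | hh, hne⟩
    · exact hh
    · exact absurd hh.1 h1
    · exact absurd hh.1 h2
  · exact fun hh => ⟨Or.inl hh, G.ne_of_adj hh⟩

lemma D_delE_fst {G : SimpleGraph (Fin n)} [DecidableRel G.Adj] {u v : Fin n}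
    (h : G.Adj u v) : D (delE G u v) u = D G u - 1 := by
  unfold D
  have : univ.filter ((delE G u v).Adj u) = (univ.filter (G.Adj u)).erase v := by
    ext b
    simp only [mem_filter, mem_univ, true_and, mem_erase, delE_adj]
    constructor
    · rintro ⟨h1, h2⟩
      first
      | exact ⟨fun hb => h2 (Or.inl ⟨rfl, hb⟩), h1⟩
      | exact ⟨fun hb => h2 (Or.inl hb), h1⟩
    · rintro ⟨h1, h2⟩
      refine ⟨h2, ?_⟩
      intro hc
      rcases hc with hc | hc
      · first | exact h1 hc.2 | exact h1 hc
      · exact (G.ne_of_adj h2) hc.2.symm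
  rw [this, card_erase_of_mem (by simp [h])]

lemma D_delE_snd {G : SimpleGraph (Fin n)} [DecidableRel G.Adj] {u v : Fin n}
    (h : G.Adj u v) : D (delE G u v) v = D G v - 1 := by
  have e : univ.filter ((delE G u v).Adj v) = univ.filter ((delE G v u).Adj v) := by
    ext b; rw [mem_filter, mem_filter, delE_adj, delE_adj]; tauto
  unfold D
  rw [e]
  exact D_delE_fst h.symm

lemma D_delE_other {G : SimpleGraph (Fin n)} [DecidableRel G.Adj] {u v w : Fin n}
    (h1 : w ≠ u) (h2 : w ≠ v) : D (delE G u v) w = D G w := by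
  unfold D
  congr 1
  ext b
  simp only [mem_filter, mem_univ, true_and, delE_adj]
  constructor
  · exact fun hh => hh.1
  · intro hh
    refine ⟨hh, ?_⟩
    rintro (⟨rfl, _⟩ | ⟨rfl, _⟩)
    · exact h1 rfl
    · exact h2 rfl

lemma delE_adj_of {G : SimpleGraph (Fin n)} {u v a b : Fin n} (h : (delE G u v).Adj a b) :
    G.Adj a b := h.1



lemma card_filter_val_Ico {k m : ℕ} (hm : m ≤ n) :
    (univ.filter (fun i : Fin n => k ≤ (i : ℕ) ∧ (i : ℕ) < m)).card = m - k := by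
  have himg : (univ.filter (fun i : Fin n => k ≤ (i : ℕ) ∧ (i : ℕ) < m)).image Fin.val
      = Finset.Ico k m := by
    ext j
    simp only [mem_image, mem_filter, mem_univ, true_and, mem_Ico]
    constructor
    · rintro ⟨i, hi, rfl⟩; exact hi
    · intro hj; exact ⟨⟨j, lt_of_lt_of_le hj.2 hm⟩, hj, rfl⟩
  have := Finset.card_image_of_injective
    (univ.filter (fun i : Fin n => k ≤ (i : ℕ) ∧ (i : ℕ) < m)) (Fin.val_injective)
  rw [himg, Nat.card_Ico] at this
  omega

lemma card_filter_val_lt' {k : ℕ} (hkn : k ≤ n) :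
    (univ.filter (fun i : Fin n => (i : ℕ) < k)).card = k := by
  have himg : (univ.filter (fun i : Fin n => (i : ℕ) < k)).image Fin.val = Finset.range k := by
    ext j
    simp only [mem_image, mem_filter, mem_univ, true_and, mem_range]
    constructor
    · rintro ⟨i, hi, rfl⟩; exact hi
    · intro hj; exact ⟨⟨j, lt_of_lt_of_le hj hkn⟩, hj, rfl⟩
  have := Finset.card_image_of_injective
    (univ.filter (fun i : Fin n => (i : ℕ) < k)) (Fin.val_injective)
  rw [himg, Finset.card_range] at this
  omega

lemma sum_split_pair {S : Finset (Fin n)} {a b : Fin n} (f : Fin n → ℕ)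
    (ha : a ∈ S) (hb : b ∈ S) (hne : a ≠ b) :
    ∑ i ∈ S, f i = f a + f b + ∑ i ∈ (S.erase a).erase b, f i := by
  rw [← Finset.add_sum_erase _ f ha, ← Finset.add_sum_erase _ f
    (Finset.mem_erase.2 ⟨hne.symm, hb⟩), add_assoc]

section Dec

variable (z : Fin n → ℕ) (a b : Fin n)

def dec : Fin n → ℕ := fun i => if i = a ∨ i = b then z i - 1 else z i

variable {z a b}

lemma dec_a (hne : a ≠ b) : dec z a b a = z a - 1 := by simp [dec]

lemma dec_b : dec z a b b = z b - 1 := by simp [dec]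

lemma dec_other {i : Fin n} (h1 : i ≠ a) (h2 : i ≠ b) : dec z a b i = z i := by
  simp [dec, h1, h2]

lemma dec_le (i : Fin n) : dec z a b i ≤ z i := by
  unfold dec; split <;> omega

lemma dec_sum (hab : a < b) (hza : 1 ≤ z a) (hzb : 1 ≤ z b) :
    (∑ i, dec z a b i) + 2 = ∑ i, z i := by
  have hne : a ≠ b := hab.ne
  have h1 := sum_split_pair z (mem_univ a) (mem_univ b) hne
  have h2 := sum_split_pair (dec z a b) (mem_univ a) (mem_univ b) hne
  have h3 : ∑ i ∈ (univ.erase a).erase b, dec z a b i = ∑ i ∈ (univ.erase a).erase b, z i := by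
    apply Finset.sum_congr rfl
    intro i hi
    rw [Finset.mem_erase, Finset.mem_erase] at hi
    exact dec_other hi.2.1 hi.1
  rw [h1, h2, h3, dec_a hne, dec_b]
  omega

lemma dec_sorted (hs : ∀ i j : Fin n, i ≤ j → z j ≤ z i) (hab : a < b)
    (hafter : ∀ i, b < i → z i = 0)
    (hmax : ∀ i, z i ≤ z a) (hlast : ∀ j, a < j → j ≠ b → z j < z a) :
    ∀ i j : Fin n, i ≤ j → dec z a b j ≤ dec z a b i := by
  intro i j hij
  rcases eq_or_lt_of_le hij with rfl | hij'
  · exact le_refl _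
  · have hzij := hs i j hij
    by_cases hia : i = a
    · rw [hia, dec_a hab.ne]
      have haj : a < j := hia ▸ hij'
      by_cases hjb : j = b
      · rw [hjb, dec_b]; exact Nat.sub_le_sub_right (hs a b hab.le) 1
      · rw [dec_other (Fin.ne_of_gt haj) hjb]
        have := hlast j haj hjb
        omega
    · by_cases hib : i = b
      · have hbj : b < j := hib ▸ hij'
        have hja : j ≠ a := Fin.ne_of_gt (lt_trans hab hbj)
        have hjb : j ≠ b := Fin.ne_of_gt hbj
        rw [hib, dec_b, dec_other hja hjb]
        have h1 := hafter j hbj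
        omega
      · rw [dec_other hia hib]
        exact le_trans (dec_le j) hzij

lemma arith_hard (m s e w T : ℕ)
    (hkey : (m+2+s)*(m+e+s+2+w) ≤ (m+2+s)*(m+1+s) + e*(m+2+s) + T) :
    (m+1)*(m+e+s+2+w) + 1 ≤ (m+1)*m + ((e+s+1)*(m+1) + T) := by
  nlinarith [hkey, Nat.zero_le (s*w), Nat.zero_le s, Nat.zero_le w]

lemma dec_EG (hs : ∀ i j : Fin n, i ≤ j → z j ≤ z i) (heven : Even (∑ i, z i))
    (hab : a < b) (hzb : 1 ≤ z b)
    (hafter : ∀ i, b < i → z i = 0) (hmax : ∀ i, z i ≤ z a)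
    (hlast : ∀ j, a < j → j ≠ b → z j < z a)
    (hEG : ∀ k : ℕ, 1 ≤ k → k ≤ n →
      ∑ i ∈ univ.filter (fun i : Fin n => (i : ℕ) < k), z i ≤
        k * (k - 1) + ∑ i ∈ univ.filter (fun i : Fin n => k ≤ (i : ℕ)), min (z i) k) :
    ∀ k : ℕ, 1 ≤ k → k ≤ n →
      ∑ i ∈ univ.filter (fun i : Fin n => (i : ℕ) < k), dec z a b i ≤
        k * (k - 1) + ∑ i ∈ univ.filter (fun i : Fin n => k ≤ (i : ℕ)), min (dec z a b i) k := by
  intro k hk1 hkn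
  have hEGk := hEG k hk1 hkn
  have hzab : z b ≤ z a := hmax b
  set P := univ.filter (fun i : Fin n => (i : ℕ) < k) with hPdef
  set S := univ.filter (fun i : Fin n => k ≤ (i : ℕ)) with hSdef
  have hmemP : ∀ i : Fin n, i ∈ P ↔ (i : ℕ) < k := by
    intro i; rw [hPdef, mem_filter]; simp
  have hmemS : ∀ i : Fin n, i ∈ S ↔ k ≤ (i : ℕ) := by
    intro i; rw [hSdef, mem_filter]; simp
  obtain ⟨M, hM⟩ : ∃ M, k * (k - 1) = M := ⟨_, rfl⟩
  rw [hM] at hEGk ⊢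
  by_cases hbk : (b : ℕ) < k
  · -- Case A : both a and b in the prefix
    have hak : (a : ℕ) < k := lt_trans hab hbk
    have haP : a ∈ P := (hmemP a).2 hak
    have hbP : b ∈ P := (hmemP b).2 hbk
    have hL := sum_split_pair z haP hbP hab.ne
    have hL' := sum_split_pair (dec z a b) haP hbP hab.ne
    have hrest : ∑ i ∈ (P.erase a).erase b, dec z a b i = ∑ i ∈ (P.erase a).erase b, z i := by
      apply Finset.sum_congr rfl
      intro i hi
      rw [Finset.mem_erase, Finset.mem_erase] at hi
      exact dec_other hi.2.1 hi.1
    have hR : ∑ i ∈ S, min (dec z a b i) k = ∑ i ∈ S, min (z i) k := by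
      apply Finset.sum_congr rfl
      intro i hi
      rw [hmemS] at hi
      have hia : i ≠ a := by intro h; rw [h] at hi; omega
      have hib : i ≠ b := by intro h; rw [h] at hi; omega
      rw [dec_other hia hib]
    rw [dec_a hab.ne, dec_b] at hL'
    omega
  · by_cases hak : (a : ℕ) < k
    · -- Case B : a in prefix, b in suffix
      have haP : a ∈ P := (hmemP a).2 hak
      have hbS : b ∈ S := (hmemS b).2 (by omega)
      have hL := Finset.add_sum_erase P z haP
      have hL' := Finset.add_sum_erase P (dec z a b) haP
      have hrestL : ∑ i ∈ P.erase a, dec z a b i = ∑ i ∈ P.erase a, z i := by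
        apply Finset.sum_congr rfl
        intro i hi
        rw [Finset.mem_erase, hmemP] at hi
        have hib : i ≠ b := by intro h; rw [h] at hi; omega
        exact dec_other hi.1 hib
      have hR := Finset.add_sum_erase S (fun i => min (z i) k) hbS
      have hR' := Finset.add_sum_erase S (fun i => min (dec z a b i) k) hbS
      have hrestR : ∑ i ∈ S.erase b, min (dec z a b i) k = ∑ i ∈ S.erase b, min (z i) k := by
        apply Finset.sum_congr rfl
        intro i hi
        rw [Finset.mem_erase, hmemS] at hi
        have hia : i ≠ a := by
          intro h
          have h2 := hi.2
          rw [h] at h2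
          omega
        rw [dec_other hia hi.1]
      rw [dec_a hab.ne] at hL'
      simp only [dec_b] at hR' hR
      have hminb : min (z b - 1) k + 1 ≥ min (z b) k := by omega
      omega
    · -- Case C : k ≤ a.val, both in suffix
      have hkA : k ≤ (a : ℕ) := by omega
      have haS : a ∈ S := (hmemS a).2 hkA
      have hbS : b ∈ S := (hmemS b).2 (by have := hab; rw [Fin.lt_def] at this; omega)
      have hPconst : ∀ i ∈ P, z i = z a := by
        intro i hi
        rw [hmemP] at hi
        have hia : i ≤ a := by rw [Fin.le_def]; omega
        exact le_antisymm (hmax i) (hs i a hia)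
      have hPz : ∑ i ∈ P, z i = k * z a := by
        rw [Finset.sum_congr rfl hPconst, Finset.sum_const, hPdef, card_filter_val_lt' hkn,
          smul_eq_mul]
      have hPdec : ∑ i ∈ P, dec z a b i = ∑ i ∈ P, z i := by
        apply Finset.sum_congr rfl
        intro i hi
        rw [hmemP] at hi
        have hia : i ≠ a := by intro h; rw [h] at hi; omega
        have hib : i ≠ b := by
          intro h; rw [h] at hi
          have := hab; rw [Fin.lt_def] at this; omega
        exact dec_other hia hib
      by_cases hC3 : z a ≤ k
      · -- Case C3 : k ≥ max value; parity argument
        have hSz : ∑ i ∈ S, min (z i) k = ∑ i ∈ S, z i :=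
          Finset.sum_congr rfl fun i _ => min_eq_left ((hmax i).trans hC3)
        have hSdec : ∑ i ∈ S, min (dec z a b i) k = ∑ i ∈ S, dec z a b i :=
          Finset.sum_congr rfl fun i _ =>
            min_eq_left (((dec_le i).trans (hmax i)).trans hC3)
        have hsplit := sum_split_pair z haS hbS hab.ne
        have hsplit' := sum_split_pair (dec z a b) haS hbS hab.ne
        have hrest : ∑ i ∈ (S.erase a).erase b, dec z a b i
            = ∑ i ∈ (S.erase a).erase b, z i := by
          apply Finset.sum_congr rfl
          intro i hi
          rw [Finset.mem_erase, Finset.mem_erase] at hi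
          exact dec_other hi.2.1 hi.1
        rw [dec_a hab.ne, dec_b] at hsplit'
        -- parity
        have hS' : S = univ.filter (fun i : Fin n => ¬ ((i : ℕ) < k)) := by
          rw [hSdef]; apply Finset.filter_congr; intro i _; simp [not_lt]
        have hPS : ∑ i ∈ P, z i + ∑ i ∈ S, z i = ∑ i, z i := by
          rw [hPdef, hS']; exact Finset.sum_filter_add_sum_filter_not _ _ _
        obtain ⟨c, hc⟩ := heven
        have hkM : Even M := by
          rw [← hM, show k = (k-1)+1 by omega]
          simpa [mul_comm] using Nat.even_mul_succ_self (k-1)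
        obtain ⟨e, he⟩ := hkM
        have hprod : (k-1) * z a ≤ (k-1) * k := Nat.mul_le_mul_left _ hC3
        have hexp : k * z a = (k-1) * z a + z a := by
          conv_lhs => rw [show k = (k-1)+1 by omega]
          ring
        have hMexp : M = (k-1) * k := by rw [← hM]; ring
        obtain ⟨Q1, hQ1⟩ : ∃ x, (k-1) * z a = x := ⟨_, rfl⟩
        obtain ⟨Q2, hQ2⟩ : ∃ x, k * z a = x := ⟨_, rfl⟩
        rw [hQ1, hQ2] at *
        omega
      · by_cases hC1 : k < z b
        · -- Case C1 : k below all positive values in suffix: nothing changes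
          have hR : ∑ i ∈ S, min (dec z a b i) k = ∑ i ∈ S, min (z i) k := by
            apply Finset.sum_congr rfl
            intro i hi
            by_cases hia : i = a
            · rw [hia, dec_a hab.ne]; omega
            · by_cases hib : i = b
              · rw [hib, dec_b]; omega
              · rw [dec_other hia hib]
          rw [hPdec, hR]
          exact hEGk
        · -- Case C2 : z b ≤ k < z a
          have hC2 : z b ≤ k := by omega
          have hC2' : k < z a := by omega
          -- reduce to strict EG inequality at k
          have hR := Finset.add_sum_erase S (fun i => min (z i) k) hbS
          have hR' := Finset.add_sum_erase S (fun i => min (dec z a b i) k) hbS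
          have hrestR : ∑ i ∈ S.erase b, min (dec z a b i) k
              = ∑ i ∈ S.erase b, min (z i) k := by
            apply Finset.sum_congr rfl
            intro i hi
            rw [Finset.mem_erase] at hi
            by_cases hia : i = a
            · rw [hia, dec_a hab.ne]; omega
            · rw [dec_other hia hi.1]
          simp only [dec_b] at hR' hR
          have hminb : min (z b) k = z b := min_eq_left hC2
          have hminb' : min (z b - 1) k = z b - 1 := min_eq_left (by omega)
          -- strict inequality
          suffices hstrict : ∑ i ∈ P, z i + 1 ≤ M + ∑ i ∈ S, min (z i) k by omega
          -- d/T decomposition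
          have hsplitS := Finset.sum_filter_add_sum_filter_not S
            (fun i => k + 1 ≤ z i) (fun i => min (z i) k)
          set A := S.filter (fun i => k + 1 ≤ z i) with hAdef
          set B := S.filter (fun i => ¬ (k + 1 ≤ z i)) with hBdef
          have hAk : ∑ i ∈ A, min (z i) k = A.card * k := by
            rw [Finset.sum_congr rfl (fun i hi => ?_), Finset.sum_const, smul_eq_mul]
            rw [hAdef, mem_filter] at hi
            exact min_eq_right (by omega)
          have hBz : ∑ i ∈ B, min (z i) k = ∑ i ∈ B, z i := by
            apply Finset.sum_congr rfl
            intro i hi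
            rw [hBdef, mem_filter] at hi
            exact min_eq_left (by omega)
          set d := A.card with hddef
          set T := ∑ i ∈ B, z i with hTdef
          have hT1 : 1 ≤ T := by
            have hbB : b ∈ B := by
              rw [hBdef, mem_filter]
              exact ⟨hbS, by omega⟩
            calc 1 ≤ z b := hzb
              _ ≤ T := Finset.single_le_sum (fun i _ => Nat.zero_le _) hbB
          rw [hPz]
          by_cases hdz : z a < k + d
          · have h1 : k * z a ≤ M + d * k := by
              calc k * z a ≤ k * ((k-1) + d) := Nat.mul_le_mul_left _ (by omega)
                _ = k * (k-1) + d * k := by ring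
                _ = M + d * k := by rw [hM]
            omega
          · -- hard subcase : k + d ≤ z a ; use EG at t1 = a.val + 1
            have hdz' : k + d ≤ z a := by omega
            set t1 := (a : ℕ) + 1 with ht1def
            have ht1n : t1 ≤ n := a.isLt
            have hEGt := hEG t1 (by omega) ht1n
            have hPz' : ∑ i ∈ univ.filter (fun i : Fin n => (i : ℕ) < t1), z i = t1 * z a := by
              rw [Finset.sum_congr rfl (fun i hi => ?_), Finset.sum_const,
                card_filter_val_lt' ht1n, smul_eq_mul]
              rw [mem_filter] at hi
              have hia : i ≤ a := by rw [Fin.le_def]; omega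
              exact le_antisymm (hmax i) (hs i a hia)
            set S1 := univ.filter (fun i : Fin n => t1 ≤ (i : ℕ)) with hS1def
            have hsplitS1 := Finset.sum_filter_add_sum_filter_not S1
              (fun i => k + 1 ≤ z i) (fun i => min (z i) t1)
            set A' := S1.filter (fun i => k + 1 ≤ z i) with hA'def
            set B' := S1.filter (fun i => ¬ (k + 1 ≤ z i)) with hB'def
            have hA'bound : ∑ i ∈ A', min (z i) t1 ≤ A'.card * t1 := by
              rw [← smul_eq_mul]
              exact Finset.sum_le_card_nsmul _ _ _ (fun i _ => min_le_right _ _)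
            have hB'B : B' = B := by
              ext i
              simp only [hB'def, hBdef, hS1def, hSdef, mem_filter, mem_univ, true_and]
              constructor
              · rintro ⟨h1, h2⟩; exact ⟨by omega, h2⟩
              · rintro ⟨h1, h2⟩
                refine ⟨?_, h2⟩
                by_contra hlt
                have hia : i ≤ a := by rw [Fin.le_def]; omega
                have : z i = z a := le_antisymm (hmax i) (hs i a hia)
                omega
            have hB'z : ∑ i ∈ B', min (z i) t1 = T := by
              rw [hB'B, hTdef]
              apply Finset.sum_congr rfl
              intro i hi
              rw [hBdef, mem_filter] at hi
              exact min_eq_left (by omega)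
            -- d = A'.card + (t1 - k)
            have hcardA : d = A'.card + (t1 - k) := by
              have hsplitA := Finset.card_filter_add_card_filter_not
                (s := A) (p := fun i : Fin n => (i : ℕ) < t1)
              have h1 : A.filter (fun i : Fin n => ¬ ((i : ℕ) < t1)) = A' := by
                ext i
                simp only [hAdef, hA'def, hS1def, hSdef, mem_filter, mem_univ, true_and]
                constructor
                · rintro ⟨⟨h1, h2⟩, h3⟩; exact ⟨by omega, h2⟩
                · rintro ⟨h1, h2⟩; exact ⟨⟨by omega, h2⟩, by omega⟩
              have h2 : A.filter (fun i : Fin n => (i : ℕ) < t1)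
                  = univ.filter (fun i : Fin n => k ≤ (i : ℕ) ∧ (i : ℕ) < t1) := by
                ext i
                simp only [hAdef, hSdef, mem_filter, mem_univ, true_and]
                constructor
                · rintro ⟨⟨h1, h2⟩, h3⟩; exact ⟨h1, h3⟩
                · rintro ⟨h1, h2⟩
                  have hia : i ≤ a := by rw [Fin.le_def]; omega
                  have : z i = z a := le_antisymm (hmax i) (hs i a hia)
                  exact ⟨⟨h1, by omega⟩, h2⟩
              rw [h1, h2, card_filter_val_Ico ht1n] at hsplitA
              omega
            -- assemble the EG inequality at t1
            have hkey : t1 * z a ≤ t1 * (t1 - 1) + A'.card * t1 + T := by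
              rw [hPz'] at hEGt
              linarith [hEGt, hsplitS1, hB'z, hA'bound]
            -- final arithmetic over ℤ
            have hka : k + 1 ≤ t1 := by omega
            set e := A'.card with hedef
            rw [← hsplitS, hAk, hBz, ← hM]
            obtain ⟨m, hm⟩ : ∃ m, k = m + 1 := ⟨k - 1, by omega⟩
            obtain ⟨s, hs1⟩ : ∃ s, t1 = m + 2 + s := ⟨t1 - k - 1, by omega⟩
            have hd : d = e + s + 1 := by omega
            obtain ⟨w, hw⟩ : ∃ w, z a = m + e + s + 2 + w := ⟨z a - (m+e+s+2), by omega⟩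
            rw [hs1, hw] at hkey
            rw [show (m + 2 + s) - 1 = m + 1 + s by omega] at hkey
            rw [hm, hw, hd]
            rw [show (m + 1) - 1 = m by omega]
            exact arith_hard m s e w T hkey

end Dec

theorem eg_forward (G : SimpleGraph (Fin n)) [DecidableRel G.Adj] (k : ℕ)
    (hkn : k ≤ n) :
    ∑ i ∈ univ.filter (fun i : Fin n => (i : ℕ) < k), G.degree i ≤
      k * (k - 1) + ∑ i ∈ univ.filter (fun i : Fin n => k ≤ (i : ℕ)), min (G.degree i) k := by
  classical
  set P := univ.filter (fun i : Fin n => (i : ℕ) < k) with hP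
  set Q := univ.filter (fun i : Fin n => k ≤ (i : ℕ)) with hQ
  have hPcard : P.card = k := card_filter_val_lt' hkn
  have hdisj : Disjoint P Q := by
    rw [Finset.disjoint_filter]
    intro i _ hi
    omega
  have hunion : P ∪ Q = univ := by
    ext i
    simp only [hP, hQ, mem_union, mem_filter, mem_univ, true_and, iff_true]
    omega
  have hdeg : ∀ i, G.degree i = (P.filter (G.Adj i)).card + (Q.filter (G.Adj i)).card := by
    intro i
    rw [degree, neighborFinset_eq_filter, ← hunion, filter_union,
      card_union_of_disjoint (Finset.disjoint_filter_filter hdisj)]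
  have hstep : ∑ i ∈ P, G.degree i =
      (∑ i ∈ P, (P.filter (G.Adj i)).card) + ∑ i ∈ P, (Q.filter (G.Adj i)).card := by
    rw [← Finset.sum_add_distrib]
    exact Finset.sum_congr rfl fun i _ => hdeg i
  have hboundA : ∑ i ∈ P, (P.filter (G.Adj i)).card ≤ k * (k - 1) := by
    calc ∑ i ∈ P, (P.filter (G.Adj i)).card ≤ ∑ _i ∈ P, (k - 1) := by
          apply Finset.sum_le_sum
          intro i hi
          have hsub : P.filter (G.Adj i) ⊆ P.erase i := by
            intro j hj
            rw [mem_filter] at hj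
            exact Finset.mem_erase.2 ⟨fun hji => G.loopless.irrefl i (hji ▸ hj.2), hj.1⟩
          calc (P.filter (G.Adj i)).card ≤ (P.erase i).card := Finset.card_le_card hsub
            _ = k - 1 := by rw [Finset.card_erase_of_mem hi, hPcard]
      _ = k * (k - 1) := by rw [Finset.sum_const, hPcard, smul_eq_mul]
  have hswap : ∑ i ∈ P, (Q.filter (G.Adj i)).card = ∑ j ∈ Q, (P.filter (G.Adj j)).card := by
    have h1 : ∀ i, (Q.filter (G.Adj i)).card = ∑ j ∈ Q, if G.Adj i j then 1 else 0 :=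
      fun i => Finset.card_filter _ _
    have h2 : ∀ j, (P.filter (G.Adj j)).card = ∑ i ∈ P, if G.Adj j i then 1 else 0 :=
      fun j => Finset.card_filter _ _
    simp only [h1, h2]
    rw [Finset.sum_comm]
    apply Finset.sum_congr rfl
    intro j _
    apply Finset.sum_congr rfl
    intro i _
    simp [G.adj_comm]
  have hboundB : ∀ j, (P.filter (G.Adj j)).card ≤ min (G.degree j) k := by
    intro j
    apply le_min
    · rw [degree, neighborFinset_eq_filter]
      exact Finset.card_le_card (fun x hx => by
        rw [mem_filter] at hx ⊢; exact ⟨mem_univ x, hx.2⟩)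
    · rw [← hPcard]
      exact Finset.card_le_card (Finset.filter_subset _ _)
  calc ∑ i ∈ P, G.degree i
      = (∑ i ∈ P, (P.filter (G.Adj i)).card) + ∑ i ∈ P, (Q.filter (G.Adj i)).card := hstep
    _ ≤ k * (k - 1) + ∑ j ∈ Q, (P.filter (G.Adj j)).card := by
        rw [hswap]; exact Nat.add_le_add_right hboundA _
    _ ≤ k * (k - 1) + ∑ j ∈ Q, min (G.degree j) k := by
        exact Nat.add_le_add_left (Finset.sum_le_sum fun j _ => hboundB j) _



lemma min_one_eq (m : ℕ) : min m 1 = if 1 ≤ m then 1 else 0 := by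
  split <;> omega

lemma exists_ab (z : Fin n → ℕ)
    (hs : ∀ i j : Fin n, i ≤ j → z j ≤ z i)
    (hEG : ∀ k : ℕ, 1 ≤ k → k ≤ n →
      ∑ i ∈ univ.filter (fun i : Fin n => (i : ℕ) < k), z i ≤
        k * (k - 1) + ∑ i ∈ univ.filter (fun i : Fin n => k ≤ (i : ℕ)), min (z i) k)
    (hpos : 0 < ∑ i, z i) :
    ∃ a b : Fin n, a < b ∧ 1 ≤ z b ∧ (∀ i, b < i → z i = 0) ∧ (∀ i, z i ≤ z a) ∧
      (∀ j, a < j → j ≠ b → z j < z a) ∧ z a ≤ (b : ℕ) := by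
  classical
  have hFne : (univ.filter (fun i : Fin n => z i ≠ 0)).Nonempty := by
    obtain ⟨i, -, hi⟩ := Finset.exists_ne_zero_of_sum_ne_zero hpos.ne'
    exact ⟨i, by simp [hi]⟩
  set b := (univ.filter (fun i : Fin n => z i ≠ 0)).max' hFne with hbdef
  have hzb : z b ≠ 0 := (mem_filter.1 ((univ.filter (fun i : Fin n => z i ≠ 0)).max'_mem hFne)).2
  have hbmax : ∀ i, z i ≠ 0 → i ≤ b := fun i hi => Finset.le_max' _ i (by simp [hi])
  have hafter : ∀ i, b < i → z i = 0 := by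
    intro i hi
    by_contra hzi
    exact absurd (hbmax i hzi) (not_le.2 hi)
  have hn : 0 < n := b.pos
  -- t : the largest index attaining the max value
  have hMne : (univ.filter (fun i : Fin n => ∀ j, z j ≤ z i)).Nonempty := by
    obtain ⟨t0, -, ht0⟩ := Finset.exists_max_image (univ : Finset (Fin n)) z ⟨b, mem_univ b⟩
    exact ⟨t0, by simp only [mem_filter, mem_univ, true_and]; exact fun j => ht0 j (mem_univ j)⟩
  set t := (univ.filter (fun i : Fin n => ∀ j, z j ≤ z i)).max' hMne with htdef
  have htmax' : ∀ j, z j ≤ z t :=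
    (mem_filter.1 ((univ.filter (fun i : Fin n => ∀ j, z j ≤ z i)).max'_mem hMne)).2
  have htlast : ∀ j, t < j → z j < z t := by
    intro j hj
    rcases Nat.lt_or_ge (z j) (z t) with h | h
    · exact h
    · exfalso
      have : j ≤ t := Finset.le_max' _ j (by
        simp only [mem_filter, mem_univ, true_and]
        exact fun i => le_trans (htmax' i) h)
      exact absurd this (not_le.2 hj)
  have htb : t ≤ b := hbmax t (by intro h; exact hzb (Nat.le_zero.1 (h ▸ htmax' b)))
  -- E1 : max value ≤ b.val, via EG at k = 1
  have hE1 : z t ≤ (b : ℕ) := by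
    have h1 := hEG 1 le_rfl hn
    have hL : z t ≤ ∑ i ∈ univ.filter (fun i : Fin n => (i : ℕ) < 1), z i := by
      have h0 : (⟨0, hn⟩ : Fin n) ∈ univ.filter (fun i : Fin n => (i : ℕ) < 1) := by simp
      have h2 := Finset.single_le_sum (f := z) (fun i _ => Nat.zero_le _) h0
      exact le_trans (htmax' _ |>.trans (hs ⟨0, hn⟩ t (by exact Fin.mk_le_of_le_val (Nat.zero_le _)) |>.trans le_rfl)) h2
    have hR : ∑ i ∈ univ.filter (fun i : Fin n => 1 ≤ (i : ℕ)), min (z i) 1 ≤ (b : ℕ) := by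
      have hrw : ∀ i ∈ univ.filter (fun i : Fin n => 1 ≤ (i : ℕ)),
          min (z i) 1 = if 1 ≤ z i then 1 else 0 := fun i _ => min_one_eq _
      rw [Finset.sum_congr rfl hrw, ← Finset.sum_filter, Finset.sum_const, smul_eq_mul, mul_one]
      have hsub : (univ.filter (fun i : Fin n => 1 ≤ (i : ℕ))).filter (fun i => 1 ≤ z i) ⊆
          (univ.filter (fun i : Fin n => (i : ℕ) < (b : ℕ) + 1)).erase ⟨0, hn⟩ := by
        intro i hi
        simp only [mem_filter, mem_univ, true_and] at hi
        rw [Finset.mem_erase, mem_filter]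
        have hib : i ≤ b := hbmax i (by omega)
        refine ⟨?_, mem_univ i, ?_⟩
        · intro h0; rw [Fin.ext_iff] at h0; simp at h0; omega
        · have := (Fin.le_def).1 hib; omega
      have hcard := Finset.card_le_card hsub
      have hec : ((univ.filter (fun i : Fin n => (i : ℕ) < (b : ℕ) + 1)).erase ⟨0, hn⟩).card
          = (b : ℕ) := by
        rw [Finset.card_erase_of_mem (by simp; exact Fin.mk_le_of_le_val (Nat.zero_le _)), card_filter_val_lt' (by omega)]
        omega
      omega
    omega
  rcases lt_or_eq_of_le htb with htb' | htb'
  · -- a = t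
    refine ⟨t, b, htb', Nat.one_le_iff_ne_zero.2 hzb, hafter, htmax', ?_, hE1⟩
    exact fun j hj _ => htlast j hj
  · -- t = b : all positive entries share the max value; a = b - 1
    have hb1 : 1 ≤ (b : ℕ) := by
      by_contra hb0
      have hb0' : (b : ℕ) = 0 := by omega
      have h1 := hEG 1 le_rfl hn
      have hL : z b ≤ ∑ i ∈ univ.filter (fun i : Fin n => (i : ℕ) < 1), z i := by
        have h0 : b ∈ univ.filter (fun i : Fin n => (i : ℕ) < 1) := by simp [hb0']
        exact Finset.single_le_sum (f := z) (fun i _ => Nat.zero_le _) h0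
      have hR : ∑ i ∈ univ.filter (fun i : Fin n => 1 ≤ (i : ℕ)), min (z i) 1 = 0 := by
        apply Finset.sum_eq_zero
        intro i hi
        simp only [mem_filter, mem_univ, true_and] at hi
        have : b < i := by rw [Fin.lt_def]; omega
        simp [hafter i this]
      omega
    set a : Fin n := ⟨(b : ℕ) - 1, by omega⟩ with hadef
    have hab : a < b := by rw [Fin.lt_def]; simp only [hadef]; omega
    have hza : z a = z t := le_antisymm (htmax' a) (htb' ▸ hs a b hab.le)
    refine ⟨a, b, hab, Nat.one_le_iff_ne_zero.2 hzb, hafter, fun i => hza ▸ htmax' i, ?_, hza ▸ hE1⟩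
    intro j hj hjb
    have : b < j := by
      rw [Fin.lt_def] at hj ⊢
      simp only [hadef] at hj
      have := Fin.val_ne_of_ne hjb
      omega
    rw [hafter j this, hza]
    exact Nat.lt_of_lt_of_le (Nat.pos_of_ne_zero hzb) (htmax' b)

lemma card_erase_ge {s : Finset (Fin n)} {x : Fin n} : s.card - 1 ≤ (s.erase x).card := by
  by_cases hx : x ∈ s
  · rw [Finset.card_erase_of_mem hx]
  · rw [Finset.erase_eq_of_notMem hx]; omega

lemma augment (G' : SimpleGraph (Fin n)) (instG' : DecidableRel G'.Adj)
    (z : Fin n → ℕ) (a b : Fin n)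
    (hab : a < b) (hzb : 1 ≤ z b) (hzab : z b ≤ z a) (hE1 : z a ≤ (b : ℕ))
    (hyb : ∀ y : Fin n, (y : ℕ) ≤ (b : ℕ) → z b ≤ z y)
    (hdeg : ∀ i, D G' i = dec z a b i) :
    ∃ (G : SimpleGraph (Fin n)) (_inst : DecidableRel G.Adj), ∀ i, G.degree i = z i := by
  have hne : a ≠ b := hab.ne
  have hza1 : 1 ≤ z a := hzb.trans hzab
  have hda : D G' a = z a - 1 := by rw [hdeg a, dec_a hne]
  have hdb : D G' b = z b - 1 := by rw [hdeg b, dec_b]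
  by_cases hadj : G'.Adj a b
  · -- a ~ b in G' : need a 2-switch
    -- Step 1 : find y with y ≤ b, y ∉ {a,b}, not adjacent to a
    have hy : ∃ y : Fin n, (y : ℕ) ≤ (b : ℕ) ∧ y ≠ a ∧ y ≠ b ∧ ¬G'.Adj a y := by
      by_contra hC
      push_neg at hC
      have hall : ∀ y : Fin n, (y : ℕ) ≤ (b : ℕ) → y ≠ a → y ≠ b → G'.Adj a y := by
        intro y h1 h2 h3
        exact hC y h1 h2 h3
      have hsub : (univ.filter (fun i : Fin n => (i : ℕ) < (b : ℕ) + 1)).erase a ⊆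
          univ.filter (G'.Adj a) := by
        intro i hi
        rw [Finset.mem_erase, mem_filter] at hi
        rw [mem_filter]
        refine ⟨mem_univ i, ?_⟩
        by_cases hib : i = b
        · rw [hib]; exact hadj
        · exact hall i (by omega) hi.1 hib
      have hc1 : ((univ.filter (fun i : Fin n => (i : ℕ) < (b : ℕ) + 1)).erase a).card
          = (b : ℕ) := by
        rw [Finset.card_erase_of_mem (by
          rw [mem_filter]
          exact ⟨mem_univ a, by have := hab; rw [Fin.lt_def] at this; omega⟩),
          card_filter_val_lt' b.isLt]
        omega
      have hc2 := Finset.card_le_card hsub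
      rw [hc1] at hc2
      have : (univ.filter (G'.Adj a)).card = D G' a := rfl
      omega
    obtain ⟨y, hyleb, hya, hyb', hyadj⟩ := hy
    have hdy : D G' y = z y := by rw [hdeg y, dec_other hya hyb']
    have hzy : z b ≤ z y := hyb y hyleb
    -- Step 2 : find w adjacent to y, w ∉ {a,b}, not adjacent to b
    have hw : ∃ w : Fin n, G'.Adj y w ∧ w ≠ a ∧ w ≠ b ∧ ¬G'.Adj b w := by
      by_contra hC
      push_neg at hC
      have hsub : (univ.filter (G'.Adj y)).erase b ⊆
          ((univ.filter (G'.Adj b)).erase a).erase y := by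
        intro w hw
        rw [Finset.mem_erase, mem_filter] at hw
        obtain ⟨hwb, -, hwadj⟩ := hw
        have hwa : w ≠ a := by
          intro h; rw [h] at hwadj; exact hyadj hwadj.symm
        have := hC w hwadj hwa hwb
        have hwy : w ≠ y := fun h => G'.loopless.irrefl y (h ▸ hwadj).symm
        rw [Finset.mem_erase, Finset.mem_erase, mem_filter]
        exact ⟨hwy, hwa, mem_univ w, this⟩
      have hc := Finset.card_le_card hsub
      have hDy : (univ.filter (G'.Adj y)).card = D G' y := rfl
      have hDb : (univ.filter (G'.Adj b)).card = D G' b := rfl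
      have hc1 : D G' y - 1 ≤ ((univ.filter (G'.Adj y)).erase b).card := by
        rw [← hDy]; exact card_erase_ge
      have hc2 : (((univ.filter (G'.Adj b)).erase a).erase y).card
          ≤ (((univ.filter (G'.Adj b)).erase a)).card := Finset.card_le_card (Finset.erase_subset _ _)
      have hc3 : ((univ.filter (G'.Adj b)).erase a).card = D G' b - 1 := by
        rw [Finset.card_erase_of_mem (by rw [mem_filter]; exact ⟨mem_univ a, hadj.symm⟩), hDb]
      have hDb1 : 1 ≤ D G' b := by
        have : a ∈ univ.filter (G'.Adj b) := by rw [mem_filter]; exact ⟨mem_univ a, hadj.symm⟩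
        have := Finset.card_pos.2 ⟨a, this⟩
        exact this
      omega
    obtain ⟨w, hwadj, hwa, hwb, hwnb⟩ := hw
    have hwy : w ≠ y := fun h => G'.loopless.irrefl y (h ▸ hwadj)
    have hdw : D G' w = z w := by rw [hdeg w, dec_other hwa hwb]
    have hzw1 : 1 ≤ z w := by
      rw [← hdw]
      have : y ∈ univ.filter (G'.Adj w) := by rw [mem_filter]; exact ⟨mem_univ y, hwadj.symm⟩
      exact Finset.card_pos.2 ⟨y, this⟩
    have hzy1 : 1 ≤ z y := hzb.trans hzy
    -- the switch : G = addE (addE (delE G' y w) a y) b w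
    have hG1ay : ¬(delE G' y w).Adj a y := fun h => hyadj h.1
    have hG2bw : ¬(addE (delE G' y w) a y).Adj b w := by
      rintro ⟨h | h | h, -⟩
      · exact hwnb h.1
      · exact hne h.1.symm
      · exact hyb' h.1.symm
    refine ⟨addE (addE (delE G' y w) a y) b w, inferInstance, ?_⟩
    intro i
    rw [degree_eq_D]
    have hay : a ≠ y := hya.symm
    have hbw : b ≠ w := hwb.symm
    by_cases hia : i = a
    · rw [hia, D_addE_other hne hwa.symm, D_addE_fst hay hG1ay,
        D_delE_other hay hwa.symm, hda]
      omega
    · by_cases hib : i = b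
      · rw [hib, D_addE_fst hbw hG2bw, D_addE_other hne.symm hyb'.symm,
          D_delE_other hyb'.symm hwb.symm, hdb]
        omega
      · by_cases hiy : i = y
        · rw [hiy, D_addE_other hyb' hwy.symm, D_addE_snd hay hG1ay,
            D_delE_fst hwadj, hdy]
          omega
        · by_cases hiw : i = w
          · rw [hiw, D_addE_snd hbw hG2bw, D_addE_other hwa hwy,
              D_delE_snd hwadj, hdw]
            omega
          · rw [D_addE_other hib hiw, D_addE_other hia hiy,
              D_delE_other hiy hiw, hdeg i, dec_other hia hib]
  · -- a and b not adjacent : just add the edge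
    refine ⟨addE G' a b, inferInstance, ?_⟩
    intro i
    rw [degree_eq_D]
    by_cases hia : i = a
    · rw [hia, D_addE_fst hne hadj, hda]; omega
    · by_cases hib : i = b
      · rw [hib, D_addE_snd hne hadj, hdb]; omega
      · rw [D_addE_other hia hib, hdeg i, dec_other hia hib]

theorem eg_backward (z : Fin n → ℕ)
    (hs : ∀ i j : Fin n, i ≤ j → z j ≤ z i)
    (he : Even (∑ i, z i))
    (hEG : ∀ k : ℕ, 1 ≤ k → k ≤ n →
      ∑ i ∈ univ.filter (fun i : Fin n => (i : ℕ) < k), z i ≤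
        k * (k - 1) + ∑ i ∈ univ.filter (fun i : Fin n => k ≤ (i : ℕ)), min (z i) k) :
    ∃ (G : SimpleGraph (Fin n)) (_inst : DecidableRel G.Adj), ∀ i, G.degree i = z i := by
  suffices H : ∀ N (zz : Fin n → ℕ), (∑ i, zz i = N) →
      (∀ i j : Fin n, i ≤ j → zz j ≤ zz i) → Even (∑ i, zz i) →
      (∀ k : ℕ, 1 ≤ k → k ≤ n →
        ∑ i ∈ univ.filter (fun i : Fin n => (i : ℕ) < k), zz i ≤
          k * (k - 1) + ∑ i ∈ univ.filter (fun i : Fin n => k ≤ (i : ℕ)), min (zz i) k) →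
      ∃ (G : SimpleGraph (Fin n)) (_inst : DecidableRel G.Adj), ∀ i, G.degree i = zz i by
    exact H _ z rfl hs he hEG
  intro N
  induction N using Nat.strong_induction_on with
  | _ N IH =>
    intro zz hN hzs hze hzEG
    rcases Nat.eq_zero_or_pos N with rfl | hpos
    · have hz0 : ∀ i, zz i = 0 := by
        intro i
        exact (Finset.sum_eq_zero_iff.1 hN) i (mem_univ i)
      refine ⟨⊥, fun a b => decidable_of_iff False (by simp), ?_⟩
      intro i
      rw [degree_eq_D, hz0]
      simp only [D, Finset.card_eq_zero]
      apply Finset.filter_eq_empty_iff.mpr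
      intro x _
      simp only [SimpleGraph.bot_adj]
      exact not_false
    · obtain ⟨a, b, hab, hzb, hafter, hmax, hlast, hE1⟩ := exists_ab zz hzs hzEG (by omega)
      have hza1 : 1 ≤ zz a := hzb.trans (hmax b)
      have hsum := dec_sum hab hza1 hzb
      have hs' := dec_sorted hzs hab hafter hmax hlast
      have he' : Even (∑ i, dec zz a b i) := by
        obtain ⟨c, hc⟩ := hze
        exact ⟨c - 1, by omega⟩
      have hEG' := dec_EG hzs hze hab hzb hafter hmax hlast hzEG
      obtain ⟨G', inst', hdeg'⟩ := IH (N - 2) (by omega) (dec zz a b) (by omega) hs' he' hEG'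
      have hdegD : ∀ i, D G' i = dec zz a b i := by
        intro i
        rw [← degree_eq_D, hdeg' i]
      exact augment G' inst' zz a b hab hzb (hmax b) hE1
        (fun y hy => hzs y b (by rw [Fin.le_def]; omega)) hdegD

/-- Erdős–Gallai theorem: a nonincreasing sequence of naturals with even sum is graphical
iff the Erdős–Gallai inequalities hold. -/
theorem stmt3 (n : ℕ) (z : Fin n → ℕ)
    (hsorted : ∀ i j : Fin n, i ≤ j → z j ≤ z i)
    (heven : Even (∑ i, z i)) :
    (∃ G : SimpleGraph (Fin n), ∃ _inst : DecidableRel G.Adj, ∀ i, G.degree i = z i) ↔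
    (∀ k : ℕ, 1 ≤ k → k ≤ n →
      ∑ i ∈ Finset.univ.filter (fun i : Fin n => (i : ℕ) < k), z i ≤
        k * (k - 1) + ∑ i ∈ Finset.univ.filter (fun i : Fin n => k ≤ (i : ℕ)), min (z i) k) := by
  constructor
  · rintro ⟨G, inst, hdeg⟩ k hk1 hkn
    have h := eg_forward G k hkn
    have h1 : ∑ i ∈ univ.filter (fun i : Fin n => (i : ℕ) < k), G.degree i
        = ∑ i ∈ univ.filter (fun i : Fin n => (i : ℕ) < k), z i :=
      Finset.sum_congr rfl (fun i _ => hdeg i)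
    have h2 : ∑ i ∈ univ.filter (fun i : Fin n => k ≤ (i : ℕ)), min (G.degree i) k
        = ∑ i ∈ univ.filter (fun i : Fin n => k ≤ (i : ℕ)), min (z i) k :=
      Finset.sum_congr rfl (fun i _ => by rw [hdeg i])
    rw [h1, h2] at h
    exact h
  · exact eg_backward z hsorted heven
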